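/- arXiv:2002.03440 — 5 statements merged into one kernel-verified Lean document; each statement's English description precedes it below -/
import Mathlib

section
/- Let α > 0, λ ∈ ℂ, and define f(x) = x·e^{λx}·v(-2λx) where v is twice differentiable. Then f satisfies the ODE -f''(x) + (2λα/x)f(x) + λ²f(x) = 0 on (0,1) if and only if v satisfies the Kummer (confluent hypergeometric) equation ξ v''(ξ) + (2-ξ) v'(ξ) - (1-α) v(ξ) = 0 at ξ = -2λx (for λ ≠ 0). -/
open Set

/-- The substitution f(x) = x e^{λx} v(-2λx) transforms the quadratic pencil equation
-f'' + (2λα/x)f + λ²f = 0 into the Kummer equation ξv'' + (2-ξ)v' - (1-α)v = 0 at ξ = -2λx. -/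
theorem kummer_substitution
    (α : ℝ) (hα : 0 < α) (lam : ℂ) (hlam : lam ≠ 0)
    (v v' v'' : ℂ → ℂ)
    (hv : ∀ ξ : ℂ, HasDerivAt v (v' ξ) ξ)
    (hv' : ∀ ξ : ℂ, HasDerivAt v' (v'' ξ) ξ)
    (f : ℝ → ℂ)
    (hf : f = fun x : ℝ => (x : ℂ) * Complex.exp (lam * x) * v (-2 * lam * x)) :
    ∀ x ∈ Ioo (0:ℝ) 1,
      (-(deriv (deriv f) x) + (2 * lam * α / (x : ℂ)) * f x + lam ^ 2 * f x = 0
        ↔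
       (-2 * lam * (x : ℂ)) * v'' (-2 * lam * x)
          + (2 - (-2 * lam * (x : ℂ))) * v' (-2 * lam * x)
          - (1 - (α : ℂ)) * v (-2 * lam * x) = 0) := by
  subst hf
  have hX : ∀ x : ℝ, HasDerivAt (fun y : ℝ => (y : ℂ)) 1 x := fun x =>
    (hasDerivAt_id ((x : ℂ))).comp_ofReal
  have hE : ∀ x : ℝ, HasDerivAt (fun y : ℝ => Complex.exp (lam * y))
      (lam * Complex.exp (lam * x)) x := by
    intro x
    have h : HasDerivAt (fun w : ℂ => Complex.exp (lam * w))
        (lam * Complex.exp (lam * x)) (x : ℂ) := by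
      have := ((hasDerivAt_id ((x : ℂ))).const_mul lam).cexp
      simpa [mul_comm] using this
    exact h.comp_ofReal
  have hV : ∀ x : ℝ, HasDerivAt (fun y : ℝ => v (-2 * lam * y))
      (-2 * lam * v' (-2 * lam * x)) x := by
    intro x
    have h : HasDerivAt (fun w : ℂ => v (-2 * lam * w))
        (-2 * lam * v' (-2 * lam * x)) (x : ℂ) := by
      have h2 : HasDerivAt (fun w : ℂ => -2 * lam * w) (-2 * lam) (x : ℂ) := by
        simpa using (hasDerivAt_id ((x : ℂ))).const_mul (-2 * lam)
      simpa [Function.comp_def, mul_comm] using (hv (-2 * lam * x)).comp (x : ℂ) h2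
    exact h.comp_ofReal
  have hV' : ∀ x : ℝ, HasDerivAt (fun y : ℝ => v' (-2 * lam * y))
      (-2 * lam * v'' (-2 * lam * x)) x := by
    intro x
    have h : HasDerivAt (fun w : ℂ => v' (-2 * lam * w))
        (-2 * lam * v'' (-2 * lam * x)) (x : ℂ) := by
      have h2 : HasDerivAt (fun w : ℂ => -2 * lam * w) (-2 * lam) (x : ℂ) := by
        simpa using (hasDerivAt_id ((x : ℂ))).const_mul (-2 * lam)
      simpa [Function.comp_def, mul_comm] using (hv' (-2 * lam * x)).comp (x : ℂ) h2
    exact h.comp_ofReal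
  set F1 : ℝ → ℂ := fun x =>
      ((1 : ℂ) * Complex.exp (lam * x) + (x : ℂ) * (lam * Complex.exp (lam * x)))
        * v (-2 * lam * x)
      + (x : ℂ) * Complex.exp (lam * x) * (-2 * lam * v' (-2 * lam * x)) with hF1
  have hDf : ∀ x : ℝ, HasDerivAt
      (fun y : ℝ => (y : ℂ) * Complex.exp (lam * y) * v (-2 * lam * y)) (F1 x) x :=
    fun x => ((hX x).mul (hE x)).mul (hV x)
  have hderiv1 : deriv (fun y : ℝ => (y : ℂ) * Complex.exp (lam * y) * v (-2 * lam * y)) = F1 :=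
    funext fun x => (hDf x).deriv
  set F2 : ℝ → ℂ := fun x =>
      (((1 : ℂ) * (lam * Complex.exp (lam * x))
          + ((1 : ℂ) * (lam * Complex.exp (lam * x))
            + (x : ℂ) * (lam * (lam * Complex.exp (lam * x)))))
          * v (-2 * lam * x)
        + ((1 : ℂ) * Complex.exp (lam * x) + (x : ℂ) * (lam * Complex.exp (lam * x)))
          * (-2 * lam * v' (-2 * lam * x)))
      + ((((1 : ℂ) * Complex.exp (lam * x) + (x : ℂ) * (lam * Complex.exp (lam * x)))
          * (-2 * lam * v' (-2 * lam * x)))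
        + (x : ℂ) * Complex.exp (lam * x) * (-2 * lam * (-2 * lam * v'' (-2 * lam * x))))
      with hF2
  have hDF1 : ∀ x : ℝ, HasDerivAt F1 (F2 x) x := by
    intro x
    have ha : HasDerivAt (fun y : ℝ =>
        ((1 : ℂ) * Complex.exp (lam * y) + (y : ℂ) * (lam * Complex.exp (lam * y)))
          * v (-2 * lam * y))
        (((1 : ℂ) * (lam * Complex.exp (lam * x))
          + ((1 : ℂ) * (lam * Complex.exp (lam * x))
            + (x : ℂ) * (lam * (lam * Complex.exp (lam * x)))))
          * v (-2 * lam * x)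
        + ((1 : ℂ) * Complex.exp (lam * x) + (x : ℂ) * (lam * Complex.exp (lam * x)))
          * (-2 * lam * v' (-2 * lam * x))) x := by
      exact ((((hE x).const_mul (1 : ℂ)).add ((hX x).mul ((hE x).const_mul lam))).mul (hV x))
    have hb : HasDerivAt (fun y : ℝ =>
        (y : ℂ) * Complex.exp (lam * y) * (-2 * lam * v' (-2 * lam * y)))
        ((((1 : ℂ) * Complex.exp (lam * x) + (x : ℂ) * (lam * Complex.exp (lam * x)))
          * (-2 * lam * v' (-2 * lam * x)))
        + (x : ℂ) * Complex.exp (lam * x) * (-2 * lam * (-2 * lam * v'' (-2 * lam * x)))) x := by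
      exact ((hX x).mul (hE x)).mul ((hV' x).const_mul (-2 * lam))
    exact ha.add hb
  have hderiv2 : ∀ x : ℝ, deriv F1 x = F2 x := fun x => (hDF1 x).deriv
  rintro x ⟨hx0, _⟩
  have hxne : (x : ℂ) ≠ 0 := by exact_mod_cast ne_of_gt hx0
  rw [hderiv1, hderiv2]
  have key : -(F2 x) + (2 * lam * (α : ℂ) / (x : ℂ))
        * ((x : ℂ) * Complex.exp (lam * x) * v (-2 * lam * x))
      + lam ^ 2 * ((x : ℂ) * Complex.exp (lam * x) * v (-2 * lam * x))
      = (2 * lam * Complex.exp (lam * x)) *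
        ((-2 * lam * (x : ℂ)) * v'' (-2 * lam * x)
          + (2 - (-2 * lam * (x : ℂ))) * v' (-2 * lam * x)
          - (1 - (α : ℂ)) * v (-2 * lam * x)) := by
    simp only [hF2]
    field_simp
    ring
  rw [key]
  constructor
  · intro h
    rcases mul_eq_zero.mp h with h | h
    · exact absurd h (mul_ne_zero (mul_ne_zero two_ne_zero hlam) (Complex.exp_ne_zero _))
    · exact h
  · intro h
    rw [h, mul_zero]
end

section
/- Let n ∈ ℕ, μ < 0 a real number with L_n^{(1)}(-2μ) = 0, and define f(x) = x·e^{μx}·L_n^{(1)}(-2μx), where L_n^{(1)} is the associated Laguerre polynomial. Then f(0) = 0, f(1) = 0, and f satisfies -f''(x) + (2(n+1)μ/x)f(x) + μ²f(x) = 0 for all x ∈ (0,1). -/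
open Set

/-- The associated Laguerre polynomial L_n^{(β)}(z) = Σ_{k=0}^n (-1)^k C(n+β, n-k) z^k / k!. -/
noncomputable def laguerre (β n : ℕ) (z : ℂ) : ℂ :=
  ∑ k ∈ Finset.range (n + 1),
    (-1 : ℂ) ^ k * ((n + β).choose (n - k) : ℂ) * z ^ k / (Nat.factorial k : ℂ)

/-- Coefficients of `L_n^{(1)}`. -/
noncomputable def lagC (n k : ℕ) : ℂ := (-1:ℂ)^k * ((n+1).choose (n-k) : ℂ) / (k.factorial : ℂ)

/-- `L_n^{(1)}` as a polynomial. -/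
noncomputable def lagP (n : ℕ) : Polynomial ℂ :=
  ∑ k ∈ Finset.range (n+1), Polynomial.C (lagC n k) * Polynomial.X ^ k

lemma laguerre_eval (n : ℕ) (z : ℂ) : laguerre 1 n z = (lagP n).eval z := by
  simp only [laguerre, lagP, Polynomial.eval_finset_sum, Polynomial.eval_mul, Polynomial.eval_C,
    Polynomial.eval_pow, Polynomial.eval_X, lagC]
  exact Finset.sum_congr rfl fun k _ => by ring

lemma coeff_lagP (n m : ℕ) : (lagP n).coeff m = if m ≤ n then lagC n m else 0 := by
  simp [lagP, Polynomial.finset_sum_coeff, Polynomial.coeff_C_mul, Polynomial.coeff_X_pow,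
    Finset.sum_ite_eq, Nat.lt_succ_iff]

lemma nat_key (n k : ℕ) (h : k < n) :
    (n - k) * (n+1).choose (n-k) = (k+2) * (n+1).choose (n-k-1) := by
  have := Nat.choose_succ_right_eq (n+1) (n-k-1)
  have h1 : n - k - 1 + 1 = n - k := by omega
  have h2 : n + 1 - (n - k - 1) = k + 2 := by omega
  rw [h1, h2] at this
  rw [mul_comm (n-k), mul_comm (k+2)]
  exact this

lemma lagC_key (n k : ℕ) (h : k < n) :
    ((k:ℂ)+1)*((k:ℂ)+2) * lagC n (k+1) + ((n:ℂ) - (k:ℂ)) * lagC n k = 0 := by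
  have hc : ((n:ℂ) - (k:ℂ)) * ((n+1).choose (n-k) : ℂ)
      = ((k:ℂ)+2) * ((n+1).choose (n-k-1) : ℂ) := by
    have := congrArg (Nat.cast : ℕ → ℂ) (nat_key n k h)
    push_cast [Nat.cast_sub h.le] at this
    convert this using 2
  have h3 : n - (k+1) = n - k - 1 := by omega
  have hf0 : (k.factorial : ℂ) ≠ 0 := by exact_mod_cast k.factorial_ne_zero
  have hk0 : ((k:ℂ)+1) ≠ 0 := by
    have : ((k+1:ℕ):ℂ) ≠ 0 := Nat.cast_ne_zero.mpr (Nat.succ_ne_zero k)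
    push_cast at this; exact this
  have hk1 : ((k+1).factorial : ℂ) = ((k:ℂ)+1) * (k.factorial : ℂ) := by
    push_cast [Nat.factorial_succ]; ring
  have expand : ((k:ℂ)+1)*((k:ℂ)+2) * lagC n (k+1) + ((n:ℂ) - (k:ℂ)) * lagC n k
      = ((-1:ℂ)^k / (k.factorial : ℂ)) *
        ((((n:ℂ) - (k:ℂ)) * ((n+1).choose (n-k) : ℂ))
          - (((k:ℂ)+2) * ((n+1).choose (n-k-1) : ℂ))) := by
    unfold lagC
    rw [h3, hk1, pow_succ]
    field_simp
    ring
  rw [expand, hc, sub_self, mul_zero]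

open Polynomial in
lemma lagP_ode (n : ℕ) :
    Polynomial.X * Polynomial.derivative (Polynomial.derivative (lagP n))
      + Polynomial.C 2 * Polynomial.derivative (lagP n)
      - Polynomial.X * Polynomial.derivative (lagP n)
      + Polynomial.C (n:ℂ) * lagP n = 0 := by
  ext m
  rcases m with _ | j
  · simp only [coeff_add, coeff_sub, mul_coeff_zero, coeff_X_zero, zero_mul, coeff_C_mul,
      coeff_derivative, coeff_lagP, coeff_zero, coeff_C_zero]
    rcases Nat.eq_zero_or_pos n with hn | hn
    · subst hn; norm_num
    · have h1 : 1 ≤ n := hn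
      simp only [if_pos h1, if_pos (Nat.zero_le n)]
      have := lagC_key n 0 hn
      push_cast at this ⊢
      linear_combination this
  · simp only [coeff_add, coeff_sub, coeff_X_mul, coeff_C_mul, coeff_derivative, coeff_lagP,
      coeff_zero, coeff_C_zero]
    by_cases h1 : j + 1 ≤ n
    · by_cases h2 : j + 2 ≤ n
      · have := lagC_key n (j+1) (by omega)
        simp only [if_pos h1, if_pos h2]
        push_cast at this ⊢
        linear_combination this
      · have hjn : j + 1 = n := by omega
        simp only [if_pos h1, if_neg h2]
        subst hjn
        push_cast
        ring
    · have h2 : ¬ (j + 2 ≤ n) := by omega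
      simp only [if_neg h1, if_neg h2]
      ring

lemma ode_eval (n : ℕ) (ξ : ℂ) :
    ξ * (Polynomial.derivative (Polynomial.derivative (lagP n))).eval ξ
      + (2 - ξ) * (Polynomial.derivative (lagP n)).eval ξ + (n:ℂ) * (lagP n).eval ξ = 0 := by
  have := congrArg (Polynomial.eval ξ) (lagP_ode n)
  simp only [Polynomial.eval_add, Polynomial.eval_sub, Polynomial.eval_mul, Polynomial.eval_X,
    Polynomial.eval_C, Polynomial.eval_zero] at this
  linear_combination this

/-- The eigenfunction extended to ℂ. -/
noncomputable def lagG (n : ℕ) (μ : ℝ) : ℂ → ℂ :=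
  fun z => z * Complex.exp (↑μ * z) * (lagP n).eval (-2 * ↑μ * z)

/-- Its first derivative. -/
noncomputable def lagG1 (n : ℕ) (μ : ℝ) : ℂ → ℂ :=
  fun z => Complex.exp (↑μ * z) * ((lagP n).eval (-2*↑μ*z)
    + ↑μ * z * (lagP n).eval (-2*↑μ*z)
    + (-2*↑μ) * z * (Polynomial.derivative (lagP n)).eval (-2*↑μ*z))

/-- Its second derivative. -/
noncomputable def lagG2 (n : ℕ) (μ : ℝ) : ℂ → ℂ :=
  fun z => Complex.exp (↑μ * z) * (2*↑μ * (lagP n).eval (-2*↑μ*z)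
    - 4*↑μ * (Polynomial.derivative (lagP n)).eval (-2*↑μ*z)
    + ↑μ^2 * z * (lagP n).eval (-2*↑μ*z)
    - 4*↑μ^2*z*(Polynomial.derivative (lagP n)).eval (-2*↑μ*z)
    + 4*↑μ^2*z*(Polynomial.derivative (Polynomial.derivative (lagP n))).eval (-2*↑μ*z))

lemma hasDerivAt_polyComp (p : Polynomial ℂ) (μ : ℝ) (z : ℂ) :
    HasDerivAt (fun w : ℂ => p.eval (-2*↑μ*w))
      ((-2*↑μ) * (Polynomial.derivative p).eval (-2*↑μ*z)) z := by
  have h1 : HasDerivAt (fun w : ℂ => (-2*↑μ) * w) (-2*↑μ) z := by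
    simpa using (hasDerivAt_id z).const_mul (-2*↑μ:ℂ)
  have h2 := (p.hasDerivAt ((-2*↑μ)*z)).comp z h1
  simpa [Function.comp_def, mul_comm] using h2

lemma hasDerivAt_cexp (μ : ℝ) (z : ℂ) :
    HasDerivAt (fun z : ℂ => Complex.exp (↑μ * z)) (↑μ * Complex.exp (↑μ*z)) z := by
  simpa [mul_comm] using ((hasDerivAt_id z).const_mul (↑μ:ℂ)).cexp

lemma hasDerivAt_lagG (n : ℕ) (μ : ℝ) (z : ℂ) :
    HasDerivAt (lagG n μ) (lagG1 n μ z) z := by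
  have he := hasDerivAt_cexp μ z
  have hP := hasDerivAt_polyComp (lagP n) μ z
  have := ((hasDerivAt_id z).mul he).mul hP
  refine HasDerivAt.congr_deriv this ?_
  simp [lagG1]
  ring

lemma hasDerivAt_lagG1 (n : ℕ) (μ : ℝ) (z : ℂ) :
    HasDerivAt (lagG1 n μ) (lagG2 n μ z) z := by
  have he := hasDerivAt_cexp μ z
  have hP := hasDerivAt_polyComp (lagP n) μ z
  have hP' := hasDerivAt_polyComp (Polynomial.derivative (lagP n)) μ z
  have hA := (hP.add (((hasDerivAt_id z).const_mul (↑μ:ℂ)).mul hP)).add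
    (((hasDerivAt_id z).const_mul (-2*↑μ:ℂ)).mul hP')
  have := he.mul hA
  refine HasDerivAt.congr_deriv this ?_
  simp [lagG2]
  ring

/-- For μ < 0 with L_n^{(1)}(-2μ) = 0, the function f(x) = x e^{μx} L_n^{(1)}(-2μx)
is a Dirichlet eigenfunction of the quadratic pencil T(μ) = -d²/dx² + 2(n+1)μ/x + μ². -/
theorem laguerre_eigenfunction
    (n : ℕ) (μ : ℝ) (hμ : μ < 0)
    (hroot : laguerre 1 n (-2 * μ) = 0)
    (f : ℝ → ℂ)
    (hf : f = fun x : ℝ => (x : ℂ) * Complex.exp (μ * x) * laguerre 1 n (-2 * μ * x)) :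
    f 0 = 0 ∧ f 1 = 0 ∧
      ∀ x ∈ Ioo (0:ℝ) 1,
        -(deriv (deriv f) x) + (2 * (n + 1) * μ / (x : ℂ)) * f x + (μ : ℂ) ^ 2 * f x = 0 := by
  have hfg : f = fun x : ℝ => lagG n μ ↑x := by
    rw [hf]; funext t; rw [lagG, laguerre_eval]
  refine ⟨by simp [hf], ?_, ?_⟩
  · rw [hf]
    have h2 : laguerre 1 n (-(2 * (↑μ:ℂ))) = 0 := by
      rw [show (-(2 * (↑μ:ℂ))) = -2 * ↑μ by ring]; exact hroot
    simp [h2]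
  · intro x hx
    have hx0 : (x:ℂ) ≠ 0 := by
      exact_mod_cast ne_of_gt hx.1
    have hd1 : deriv f = fun t : ℝ => lagG1 n μ ↑t := by
      rw [hfg]; funext t
      exact ((hasDerivAt_lagG n μ t).comp_ofReal).deriv
    have hd2 : deriv (deriv f) x = lagG2 n μ ↑x := by
      rw [hd1]
      exact ((hasDerivAt_lagG1 n μ x).comp_ofReal).deriv
    rw [hd2, hfg]
    have hode := ode_eval n (-2*↑μ*↑x)
    simp only [lagG, lagG2]
    have hdiv : (2 * ((n:ℂ) + 1) * (μ:ℂ) / (x:ℂ)) *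
        ((x : ℂ) * Complex.exp ((μ:ℂ) * (x:ℂ)) * (lagP n).eval (-2*(μ:ℂ)*(x:ℂ)))
        = 2 * ((n:ℂ)+1) * (μ:ℂ) * (Complex.exp ((μ:ℂ) * (x:ℂ)) * (lagP n).eval (-2*(μ:ℂ)*(x:ℂ))) := by
      field_simp
    rw [hdiv]
    linear_combination (2*(↑μ:ℂ)*Complex.exp ((↑μ:ℂ)*(↑x:ℂ))) * hode
end

section
/- Let α > 0 and τ = -σ + iη with σ ∈ ℝ, η ∈ ℝ, η ≠ 0. For any pair (u,v) with u ∈ W_0^{1,2}((0,1)) ∩ W^{2,2}((0,1)), v ∈ W_0^{1,2}((0,1)) ∩ W^{2,2}((0,1)) and ‖u'‖_{L²}² + ‖v‖_{L²}² = 1, define G(u,v) = (v, u'' - (2α/x)v) and N = ‖(G - τ)(u,v)‖ where the norm is (‖·'‖_{L²}² + ‖·‖_{L²}²)^{1/2} applied componentwise as ‖(φ₁,φ₂)‖² = ‖φ₁'‖² + ‖φ₂‖². Then N ≥ (α - σ)/(1 + 3α/|η|). -/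
open MeasureTheory Set

/-- Product of two L² complex functions (one conjugated) is integrable. -/
lemma l2prod {μ : Measure ℝ} {F G : ℝ → ℂ}
    (hF : AEStronglyMeasurable F μ) (hG : AEStronglyMeasurable G μ)
    (hF2 : Integrable (fun x => ‖F x‖^2) μ) (hG2 : Integrable (fun x => ‖G x‖^2) μ) :
    Integrable (fun x => F x * (starRingEnd ℂ) (G x)) μ := by
  refine Integrable.mono' (((hF2.add hG2)).div_const 2)
    (hF.mul (Complex.continuous_conj.comp_aestronglyMeasurable hG))
    (Filter.Eventually.of_forall fun x => ?_)
  have h1 : ‖F x * (starRingEnd ℂ) (G x)‖ = ‖F x‖ * ‖G x‖ := by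
    simp [norm_mul]
  rw [h1]
  simp only [Pi.add_apply]
  nlinarith [sq_nonneg (‖F x‖ - ‖G x‖), norm_nonneg (F x), norm_nonneg (G x)]

/-- Cauchy–Schwarz for nonnegative real functions. -/
lemma cs_real {α : Type*} [MeasurableSpace α] {μ : Measure α} {F G : α → ℝ}
    (hFn : ∀ x, 0 ≤ F x) (hGn : ∀ x, 0 ≤ G x)
    (hFG : Integrable (fun x => F x * G x) μ)
    (hF2 : Integrable (fun x => F x ^ 2) μ) (hG2 : Integrable (fun x => G x ^ 2) μ) :
    ∫ x, F x * G x ∂μ ≤ Real.sqrt (∫ x, F x ^ 2 ∂μ) * Real.sqrt (∫ x, G x ^ 2 ∂μ) := by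
  set A := ∫ x, F x ^ 2 ∂μ with hA
  set B := ∫ x, G x ^ 2 ∂μ with hB
  have hA0 : 0 ≤ A := integral_nonneg fun x => sq_nonneg _
  have hB0 : 0 ≤ B := integral_nonneg fun x => sq_nonneg _
  by_cases hAz : A = 0
  · have hFae : (fun x => F x ^ 2) =ᵐ[μ] 0 :=
      (integral_eq_zero_iff_of_nonneg (fun x => sq_nonneg _) hF2).mp hAz
    have h0 : (fun x => F x * G x) =ᵐ[μ] 0 := by
      filter_upwards [hFae] with x hx
      simp only [Pi.zero_apply] at hx ⊢
      have : F x = 0 := by nlinarith [hFn x]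
      simp [this]
    rw [integral_congr_ae h0]
    simp [hAz, mul_nonneg (Real.sqrt_nonneg A) (Real.sqrt_nonneg B)]
  by_cases hBz : B = 0
  · have hGae : (fun x => G x ^ 2) =ᵐ[μ] 0 :=
      (integral_eq_zero_iff_of_nonneg (fun x => sq_nonneg _) hG2).mp hBz
    have h0 : (fun x => F x * G x) =ᵐ[μ] 0 := by
      filter_upwards [hGae] with x hx
      simp only [Pi.zero_apply] at hx ⊢
      have : G x = 0 := by nlinarith [hGn x]
      simp [this]
    rw [integral_congr_ae h0]
    simp [hBz, mul_nonneg (Real.sqrt_nonneg A) (Real.sqrt_nonneg B)]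
  have hApos : 0 < A := lt_of_le_of_ne hA0 (Ne.symm hAz)
  have hBpos : 0 < B := lt_of_le_of_ne hB0 (Ne.symm hBz)
  set t := Real.sqrt B / Real.sqrt A with ht
  have hsA : 0 < Real.sqrt A := Real.sqrt_pos.mpr hApos
  have hsB : 0 < Real.sqrt B := Real.sqrt_pos.mpr hBpos
  have htpos : 0 < t := div_pos hsB hsA
  have hbound : ∀ x, F x * G x ≤ (t * F x ^ 2 + G x ^ 2 / t) / 2 := by
    intro x
    rw [le_div_iff₀ (by norm_num : (0:ℝ) < 2), ← sub_nonneg]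
    have key : t * F x ^ 2 + G x ^ 2 / t - F x * G x * 2 = (t * F x - G x) ^ 2 / t := by
      field_simp
      ring
    rw [key]
    positivity
  have hInt : Integrable (fun x => (t * F x ^ 2 + G x ^ 2 / t) / 2) μ :=
    ((hF2.const_mul t).add (hG2.div_const t)).div_const 2
  have hle : ∫ x, F x * G x ∂μ ≤ ∫ x, (t * F x ^ 2 + G x ^ 2 / t) / 2 ∂μ :=
    integral_mono hFG hInt hbound
  have hA' : Real.sqrt A ^ 2 = A := Real.sq_sqrt hA0
  have hB' : Real.sqrt B ^ 2 = B := Real.sq_sqrt hB0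
  have hsub : t * A + B / t = 2 * (Real.sqrt A * Real.sqrt B) := by
    rw [ht]
    field_simp
    nlinarith [hA', hB', hsA, hsB]
  have hval : ∫ x, (t * F x ^ 2 + G x ^ 2 / t) / 2 ∂μ = Real.sqrt A * Real.sqrt B := by
    rw [integral_div, integral_add (hF2.const_mul t) (hG2.div_const t),
      integral_const_mul, integral_div, ← hA, ← hB, hsub]
    ring
  linarith [hle, hval.le, hval.ge]

/-- Cauchy–Schwarz for complex L² functions. -/
lemma cs_complex {μ : Measure ℝ} {F G : ℝ → ℂ}
    (hF : AEStronglyMeasurable F μ) (hG : AEStronglyMeasurable G μ)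
    (hF2 : Integrable (fun x => ‖F x‖^2) μ) (hG2 : Integrable (fun x => ‖G x‖^2) μ) :
    ‖∫ x, F x * (starRingEnd ℂ) (G x) ∂μ‖ ≤
      Real.sqrt (∫ x, ‖F x‖^2 ∂μ) * Real.sqrt (∫ x, ‖G x‖^2 ∂μ) := by
  have h1 : ‖∫ x, F x * (starRingEnd ℂ) (G x) ∂μ‖ ≤ ∫ x, ‖F x‖ * ‖G x‖ ∂μ := by
    refine (norm_integral_le_integral_norm _).trans (le_of_eq ?_)
    refine integral_congr_ae (Filter.Eventually.of_forall fun x => ?_)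
    simp [norm_mul]
  refine h1.trans (cs_real (fun x => norm_nonneg _) (fun x => norm_nonneg _) ?_ hF2 hG2)
  exact ((l2prod hF hG hF2 hG2).norm).congr
    (Filter.Eventually.of_forall fun x => by simp [norm_mul])


set_option maxHeartbeats 2000000 in
/-- Resolvent lower bound (inequality (2.15) of the paper): for τ = -σ + iη, η ≠ 0, and a
normalized pair (u,v) in the domain, ‖(G-τ)(u,v)‖ ≥ (α-σ)/(1+3α/|η|), where
G(u,v) = (v, u'' - (2α/x)v) and ‖(φ₁,φ₂)‖² = ‖φ₁'‖² + ‖φ₂‖². -/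
theorem resolvent_lower_bound
    (α σ η : ℝ) (hα : 0 < α) (hη : η ≠ 0)
    (τ : ℂ) (hτ : τ = -(σ : ℂ) + (η : ℂ) * Complex.I)
    (u u' u'' v v' v'' : ℝ → ℂ)
    (hucont : ContinuousOn u (Icc 0 1)) (hucont' : ContinuousOn u' (Icc 0 1))
    (hvcont : ContinuousOn v (Icc 0 1)) (hvcont' : ContinuousOn v' (Icc 0 1))
    (huderiv : ∀ x ∈ Ioo (0:ℝ) 1, HasDerivAt u (u' x) x)
    (huderiv' : ∀ x ∈ Ioo (0:ℝ) 1, HasDerivAt u' (u'' x) x)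
    (hvderiv : ∀ x ∈ Ioo (0:ℝ) 1, HasDerivAt v (v' x) x)
    (hvderiv' : ∀ x ∈ Ioo (0:ℝ) 1, HasDerivAt v' (v'' x) x)
    (hu0 : u 0 = 0) (hu1 : u 1 = 0) (hv0 : v 0 = 0) (hv1 : v 1 = 0)
    (hL2u' : IntegrableOn (fun x => ‖u' x‖^2) (Ioo 0 1))
    (hL2u'' : IntegrableOn (fun x => ‖u'' x‖^2) (Ioo 0 1))
    (hL2v : IntegrableOn (fun x => ‖v x‖^2) (Ioo 0 1))
    (hL2v' : IntegrableOn (fun x => ‖v' x‖^2) (Ioo 0 1))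
    (hL2v'' : IntegrableOn (fun x => ‖v'' x‖^2) (Ioo 0 1))
    (hL2av : IntegrableOn (fun x : ℝ => ‖(2 * α / (x:ℂ)) * v x‖^2) (Ioo 0 1))
    (hnorm : (∫ x in Ioo (0:ℝ) 1, ‖u' x‖^2) + (∫ x in Ioo (0:ℝ) 1, ‖v x‖^2) = 1)
    (N : ℝ)
    (hN : N = Real.sqrt
      ((∫ x in Ioo (0:ℝ) 1, ‖v' x - τ * u' x‖^2)
        + ∫ x in Ioo (0:ℝ) 1, ‖u'' x - (2 * α / (x:ℂ)) * v x - τ * v x‖^2)) :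
    (α - σ) / (1 + 3 * α / |η|) ≤ N := by
  have ms : MeasurableSet (Ioo (0:ℝ) 1) := measurableSet_Ioo
  set μ := volume.restrict (Ioo (0:ℝ) 1) with hμ
  -- measurability
  have hmu' : AEStronglyMeasurable u' μ :=
    (hucont'.mono Ioo_subset_Icc_self).aestronglyMeasurable ms
  have hmv : AEStronglyMeasurable v μ :=
    (hvcont.mono Ioo_subset_Icc_self).aestronglyMeasurable ms
  have hmv' : AEStronglyMeasurable v' μ :=
    (hvcont'.mono Ioo_subset_Icc_self).aestronglyMeasurable ms
  have hmu'' : AEStronglyMeasurable u'' μ := by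
    refine (measurable_deriv u').aestronglyMeasurable.congr ?_
    refine (ae_restrict_iff' ms).2 (Filter.Eventually.of_forall fun x hx => ?_)
    exact (huderiv' x hx).deriv
  have h2axEq : ∀ x : ℝ, (2 * α / (x:ℂ)) = (((2 * α / x : ℝ)) : ℂ) := by
    intro x; push_cast; ring
  have hm2a : AEStronglyMeasurable (fun x : ℝ => (2 * α / (x:ℂ)) * v x) μ := by
    have h1 : Measurable fun x : ℝ => (((2 * α / x : ℝ)) : ℂ) :=
      Complex.measurable_ofReal.comp (measurable_const.div measurable_id)
    have := h1.aestronglyMeasurable (μ := μ) |>.mul hmv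
    refine this.congr (Filter.Eventually.of_forall fun x => ?_)
    simp only [Pi.mul_apply, h2axEq]
  -- basic quantities
  set a := ∫ x in Ioo (0:ℝ) 1, ‖u' x‖^2 with ha_def
  set b := ∫ x in Ioo (0:ℝ) 1, ‖v x‖^2 with hb_def
  set A := ∫ x in Ioo (0:ℝ) 1, ‖v' x - τ * u' x‖^2 with hA_def
  set B := ∫ x in Ioo (0:ℝ) 1, ‖u'' x - (2 * α / (x:ℂ)) * v x - τ * v x‖^2 with hB_def
  have ha0 : 0 ≤ a := integral_nonneg fun x => sq_nonneg _
  have hb0 : 0 ≤ b := integral_nonneg fun x => sq_nonneg _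
  have hA0 : 0 ≤ A := integral_nonneg fun x => sq_nonneg _
  have hB0 : 0 ≤ B := integral_nonneg fun x => sq_nonneg _
  have hN0 : 0 ≤ N := hN ▸ Real.sqrt_nonneg _
  have hN2 : N ^ 2 = A + B := by
    rw [hN]; exact Real.sq_sqrt (by linarith)
  -- integrability of the residual squares
  have hmF1 : AEStronglyMeasurable (fun x => v' x - τ * u' x) μ :=
    hmv'.sub (hmu'.const_mul τ)
  have hmF2 : AEStronglyMeasurable (fun x => u'' x - (2 * α / (x:ℂ)) * v x - τ * v x) μ :=
    (hmu''.sub hm2a).sub (hmv.const_mul τ)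
  have hIA : Integrable (fun x => ‖v' x - τ * u' x‖^2) μ := by
    refine Integrable.mono' ((hL2v'.const_mul 2).add (hL2u'.const_mul (2 * ‖τ‖^2)))
      ((continuous_norm.pow 2).comp_aestronglyMeasurable hmF1)
      (Filter.Eventually.of_forall fun x => ?_)
    rw [Real.norm_of_nonneg (sq_nonneg _)]
    have h1 : ‖v' x - τ * u' x‖ ≤ ‖v' x‖ + ‖τ‖ * ‖u' x‖ := by
      simpa [norm_mul] using norm_sub_le (v' x) (τ * u' x)
    simp only [Pi.add_apply]
    nlinarith [norm_nonneg (v' x - τ * u' x), norm_nonneg (v' x), norm_nonneg (u' x),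
      norm_nonneg τ, mul_nonneg (norm_nonneg τ) (norm_nonneg (u' x)),
      sq_nonneg (‖v' x‖ - ‖τ‖ * ‖u' x‖)]
  have hIB : Integrable (fun x => ‖u'' x - (2 * α / (x:ℂ)) * v x - τ * v x‖^2) μ := by
    refine Integrable.mono'
      (((hL2u''.const_mul 3).add (hL2av.const_mul 3)).add (hL2v.const_mul (3 * ‖τ‖^2)))
      ((continuous_norm.pow 2).comp_aestronglyMeasurable hmF2)
      (Filter.Eventually.of_forall fun x => ?_)
    rw [Real.norm_of_nonneg (sq_nonneg _)]
    simp only [Pi.add_apply]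
    have h1 : ‖u'' x - (2 * α / (x:ℂ)) * v x - τ * v x‖ ≤
        ‖u'' x‖ + ‖(2 * α / (x:ℂ)) * v x‖ + ‖τ‖ * ‖v x‖ := by
      refine (norm_sub_le _ _).trans ?_
      have := norm_sub_le (u'' x) ((2 * α / (x:ℂ)) * v x)
      rw [norm_mul τ]
      linarith
    nlinarith [norm_nonneg (u'' x - (2 * α / (x:ℂ)) * v x - τ * v x), norm_nonneg (u'' x),
      norm_nonneg ((2 * α / (x:ℂ)) * v x), mul_nonneg (norm_nonneg τ) (norm_nonneg (v x)),
      sq_nonneg (‖u'' x‖ - ‖(2 * α / (x:ℂ)) * v x‖),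
      sq_nonneg (‖u'' x‖ - ‖τ‖ * ‖v x‖),
      sq_nonneg (‖(2 * α / (x:ℂ)) * v x‖ - ‖τ‖ * ‖v x‖)]
  -- Cauchy-Schwarz bounds on the two inner products
  have hI1 : ‖∫ x in Ioo (0:ℝ) 1, (v' x - τ * u' x) * (starRingEnd ℂ) (u' x)‖ ≤
      Real.sqrt A * Real.sqrt a := cs_complex hmF1 hmu' hIA hL2u'
  have hI2 : ‖∫ x in Ioo (0:ℝ) 1,
      (u'' x - (2 * α / (x:ℂ)) * v x - τ * v x) * (starRingEnd ℂ) (v x)‖ ≤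
      Real.sqrt B * Real.sqrt b := cs_complex hmF2 hmv hIB hL2v
  -- values of the inner products
  set z₁ := ∫ x in Ioo (0:ℝ) 1, v' x * (starRingEnd ℂ) (u' x) with hz1_def
  have hint_vu : Integrable (fun x => v' x * (starRingEnd ℂ) (u' x)) μ :=
    l2prod hmv' hmu' hL2v' hL2u'
  have hint_uu : Integrable (fun x => u' x * (starRingEnd ℂ) (u' x)) μ :=
    l2prod hmu' hmu' hL2u' hL2u'
  have hint_vv : Integrable (fun x => v x * (starRingEnd ℂ) (v x)) μ :=
    l2prod hmv hmv hL2v hL2v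
  have hint_uv' : Integrable (fun x => u' x * (starRingEnd ℂ) (v' x)) μ :=
    l2prod hmu' hmv' hL2u' hL2v'
  have hint_u''v : Integrable (fun x => u'' x * (starRingEnd ℂ) (v x)) μ :=
    l2prod hmu'' hmv hL2u'' hL2v
  have hint_avv : Integrable (fun x : ℝ => ((2 * α / (x:ℂ)) * v x) * (starRingEnd ℂ) (v x)) μ :=
    l2prod hm2a hmv hL2av hL2v
  -- ∫ u' conj u' = a, ∫ v conj v = b
  have huu : (∫ x in Ioo (0:ℝ) 1, u' x * (starRingEnd ℂ) (u' x)) = (a : ℂ) := by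
    rw [ha_def]
    have h1 : (∫ x in Ioo (0:ℝ) 1, u' x * (starRingEnd ℂ) (u' x))
        = ∫ x in Ioo (0:ℝ) 1, ((‖u' x‖^2 : ℝ) : ℂ) :=
      integral_congr_ae (Filter.Eventually.of_forall fun x => by
        simp only [Complex.mul_conj']; push_cast; ring)
    rw [h1]; exact integral_ofReal
  have hvv : (∫ x in Ioo (0:ℝ) 1, v x * (starRingEnd ℂ) (v x)) = (b : ℂ) := by
    rw [hb_def]
    have h1 : (∫ x in Ioo (0:ℝ) 1, v x * (starRingEnd ℂ) (v x))
        = ∫ x in Ioo (0:ℝ) 1, ((‖v x‖^2 : ℝ) : ℂ) :=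
      integral_congr_ae (Filter.Eventually.of_forall fun x => by
        simp only [Complex.mul_conj']; push_cast; ring)
    rw [h1]; exact integral_ofReal
  -- the weighted term c
  set c := ∫ x in Ioo (0:ℝ) 1, 2 * α / x * ‖v x‖^2 with hc_def
  have hIc : Integrable (fun x => 2 * α / x * ‖v x‖^2) μ := by
    refine Integrable.mono' ((hL2av.add hL2v).div_const 2)
      (((measurable_const.div measurable_id).aestronglyMeasurable (μ := μ)).mul
        ((continuous_norm.pow 2).comp_aestronglyMeasurable hmv))
      ((ae_restrict_iff' ms).2 (Filter.Eventually.of_forall fun x hx => ?_))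
    simp only [Pi.add_apply]
    have hx0 : 0 < x := hx.1
    have hnorm2a : ‖(2 * α / (x:ℂ)) * v x‖ = 2 * α / x * ‖v x‖ := by
      rw [norm_mul, h2axEq x, Complex.norm_real, Real.norm_of_nonneg (by positivity)]
    rw [Real.norm_of_nonneg (by positivity), hnorm2a]
    nlinarith [sq_nonneg (2 * α / x * ‖v x‖ - ‖v x‖), norm_nonneg (v x)]
  have havv : (∫ x in Ioo (0:ℝ) 1, ((2 * α / (x:ℂ)) * v x) * (starRingEnd ℂ) (v x)) = (c : ℂ) := by
    rw [hc_def]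
    have h1 : (∫ x in Ioo (0:ℝ) 1, ((2 * α / (x:ℂ)) * v x) * (starRingEnd ℂ) (v x))
        = ∫ x in Ioo (0:ℝ) 1, ((2 * α / x * ‖v x‖^2 : ℝ) : ℂ) :=
      integral_congr_ae (Filter.Eventually.of_forall fun x => by
        simp only [mul_assoc, Complex.mul_conj', h2axEq]; push_cast; ring)
    rw [h1]; exact integral_ofReal
  have hcb : 2 * α * b ≤ c := by
    have hle : (fun x => 2 * α * ‖v x‖^2) ≤ᵐ[μ] fun x => 2 * α / x * ‖v x‖^2 := by
      refine (ae_restrict_iff' ms).2 (Filter.Eventually.of_forall fun x hx => ?_)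
      have hx0 : 0 < x := hx.1
      have hx1 : x ≤ 1 := hx.2.le
      have : 2 * α ≤ 2 * α / x := by
        rw [le_div_iff₀ hx0]
        nlinarith
      nlinarith [sq_nonneg (‖v x‖)]
    have := integral_mono_ae (hL2v.const_mul (2 * α)) hIc hle
    rwa [integral_const_mul, ← hb_def, ← hc_def] at this
  -- integration by parts
  have hibp : (∫ x in Ioo (0:ℝ) 1, u'' x * (starRingEnd ℂ) (v x))
      + (∫ x in Ioo (0:ℝ) 1, u' x * (starRingEnd ℂ) (v' x)) = 0 := by
    have hFsum : Integrable (fun x : ℝ => u'' x * (starRingEnd ℂ) (v x)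
        + u' x * (starRingEnd ℂ) (v' x)) μ := hint_u''v.add hint_uv'
    have hFint : IntervalIntegrable (fun x : ℝ => u'' x * (starRingEnd ℂ) (v x)
        + u' x * (starRingEnd ℂ) (v' x)) volume 0 1 := by
      refine IntegrableOn.intervalIntegrable ?_
      rw [uIcc_of_le zero_le_one]
      have h1 : IntegrableOn (fun x : ℝ => u'' x * (starRingEnd ℂ) (v x)
          + u' x * (starRingEnd ℂ) (v' x)) (Ioo 0 1) volume := hFsum
      exact h1.congr_set_ae Ioo_ae_eq_Icc.symm
    have hFcont : ContinuousOn (fun x : ℝ => u' x * (starRingEnd ℂ) (v x)) (Icc 0 1) :=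
      hucont'.mul (Complex.continuous_conj.comp_continuousOn hvcont)
    have hFderiv : ∀ x ∈ Ioo (0:ℝ) 1, HasDerivWithinAt
        (fun x : ℝ => u' x * (starRingEnd ℂ) (v x))
        (u'' x * (starRingEnd ℂ) (v x) + u' x * (starRingEnd ℂ) (v' x)) (Ioi x) x := by
      intro x hx
      have hd : HasDerivAt (fun x : ℝ => u' x * (starRingEnd ℂ) (v x))
          (u'' x * (starRingEnd ℂ) (v x) + u' x * (starRingEnd ℂ) (v' x)) x := by
        have h1 : HasDerivAt (fun x : ℝ => (starRingEnd ℂ) (v x)) ((starRingEnd ℂ) (v' x)) x := by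
          simpa only [← Complex.star_def] using (hvderiv x hx).star
        exact (huderiv' x hx).mul h1
      exact hd.hasDerivWithinAt
    have key := intervalIntegral.integral_eq_sub_of_hasDeriv_right_of_le zero_le_one
      hFcont hFderiv hFint
    rw [hv0, hv1] at key
    simp only [map_zero, mul_zero, sub_zero] at key
    rw [intervalIntegral.integral_of_le zero_le_one, integral_Ioc_eq_integral_Ioo] at key
    rw [← integral_add hint_u''v hint_uv']
    exact key
  -- z₂ = conj z₁
  have hz2 : (∫ x in Ioo (0:ℝ) 1, u' x * (starRingEnd ℂ) (v' x)) = (starRingEnd ℂ) z₁ := by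
    rw [hz1_def, ← integral_conj]
    refine integral_congr_ae (Filter.Eventually.of_forall fun x => ?_)
    simp [mul_comm]
  -- the values of the two inner products
  have hE1 : (∫ x in Ioo (0:ℝ) 1, (v' x - τ * u' x) * (starRingEnd ℂ) (u' x))
      = z₁ - τ * (a : ℂ) := by
    have heq : ∀ x : ℝ, (v' x - τ * u' x) * (starRingEnd ℂ) (u' x)
        = v' x * (starRingEnd ℂ) (u' x) - τ * (u' x * (starRingEnd ℂ) (u' x)) := by
      intro x; ring
    rw [integral_congr_ae (Filter.Eventually.of_forall fun x => heq x),
      integral_sub hint_vu (hint_uu.const_mul τ), integral_const_mul, huu, hz1_def]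
  have hE2 : (∫ x in Ioo (0:ℝ) 1,
      (u'' x - (2 * α / (x:ℂ)) * v x - τ * v x) * (starRingEnd ℂ) (v x))
      = -(starRingEnd ℂ) z₁ - (c : ℂ) - τ * (b : ℂ) := by
    have heq : ∀ x : ℝ, (u'' x - (2 * α / (x:ℂ)) * v x - τ * v x) * (starRingEnd ℂ) (v x)
        = u'' x * (starRingEnd ℂ) (v x) - ((2 * α / (x:ℂ)) * v x) * (starRingEnd ℂ) (v x)
          - τ * (v x * (starRingEnd ℂ) (v x)) := by
      intro x; ring
    have hsub1 : Integrable (fun x : ℝ => u'' x * (starRingEnd ℂ) (v x)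
        - ((2 * α / (x:ℂ)) * v x) * (starRingEnd ℂ) (v x)) μ := hint_u''v.sub hint_avv
    rw [integral_congr_ae (Filter.Eventually.of_forall fun x => heq x),
      integral_sub hsub1 (hint_vv.const_mul τ),
      integral_sub hint_u''v hint_avv, integral_const_mul, havv, hvv]
    have hw : (∫ x in Ioo (0:ℝ) 1, u'' x * (starRingEnd ℂ) (v x)) = -(starRingEnd ℂ) z₁ := by
      have := hibp
      rw [hz2] at this
      linear_combination this
    rw [hw]
  -- numeric consequences
  set m := z₁.im with hm_def
  have hRe12 : ((z₁ - τ * (a:ℂ)) + (-(starRingEnd ℂ) z₁ - (c : ℂ) - τ * (b : ℂ))).re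
      = σ * (a + b) - c := by
    simp [hτ, Complex.add_re, Complex.sub_re, Complex.mul_re, Complex.conj_re, Complex.conj_im]
    ring
  have hIm12 : ((z₁ - τ * (a:ℂ)) + (-(starRingEnd ℂ) z₁ - (c : ℂ) - τ * (b : ℂ))).im
      = 2 * m - η * (a + b) := by
    simp [hτ, Complex.add_im, Complex.sub_im, Complex.mul_im, Complex.conj_re, Complex.conj_im,
      hm_def]
    ring
  have hIm1 : (z₁ - τ * (a:ℂ)).im = m - η * a := by
    simp [hτ, Complex.sub_im, Complex.mul_im, hm_def]
  -- norm bounds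
  have hsA : Real.sqrt A ≤ N := by
    rw [hN]
    exact Real.sqrt_le_sqrt (by linarith)
  have hsa : Real.sqrt a ≤ 1 :=
    (Real.sqrt_le_sqrt (by linarith : a ≤ 1)).trans_eq Real.sqrt_one
  have h2 : ‖(z₁ - τ * (a:ℂ))‖ ≤ N := by
    rw [← hE1]
    refine hI1.trans ?_
    calc Real.sqrt A * Real.sqrt a ≤ N * 1 :=
          mul_le_mul hsA hsa (Real.sqrt_nonneg _) hN0
      _ = N := mul_one N
  have h1 : ‖(z₁ - τ * (a:ℂ)) + (-(starRingEnd ℂ) z₁ - (c : ℂ) - τ * (b : ℂ))‖ ≤ N := by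
    rw [← hE1, ← hE2]
    refine (norm_add_le _ _).trans ?_
    have hstep : Real.sqrt A * Real.sqrt a + Real.sqrt B * Real.sqrt b ≤ N := by
      have hx0 : 0 ≤ Real.sqrt A * Real.sqrt a + Real.sqrt B * Real.sqrt b := by positivity
      have hsq : (Real.sqrt A * Real.sqrt a + Real.sqrt B * Real.sqrt b) ^ 2 ≤ N ^ 2 := by
        rw [hN2]
        nlinarith [Real.sq_sqrt hA0, Real.sq_sqrt hB0, Real.sq_sqrt ha0, Real.sq_sqrt hb0,
          sq_nonneg (Real.sqrt A * Real.sqrt b - Real.sqrt B * Real.sqrt a),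
          Real.sqrt_nonneg A, Real.sqrt_nonneg B, Real.sqrt_nonneg a, Real.sqrt_nonneg b,
          hnorm]
      calc Real.sqrt A * Real.sqrt a + Real.sqrt B * Real.sqrt b
          = Real.sqrt ((Real.sqrt A * Real.sqrt a + Real.sqrt B * Real.sqrt b) ^ 2) :=
            (Real.sqrt_sq hx0).symm
        _ ≤ Real.sqrt (N ^ 2) := Real.sqrt_le_sqrt hsq
        _ = N := Real.sqrt_sq hN0
    linarith [hI1, hI2]
  -- extract real inequalities
  have habs_re : |σ * (a + b) - c| ≤ N := by
    rw [← hRe12]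
    exact (Complex.abs_re_le_norm _).trans h1
  have habs_im : |2 * m - η * (a + b)| ≤ N := by
    rw [← hIm12]
    exact (Complex.abs_im_le_norm _).trans h1
  have habs_im1 : |m - η * a| ≤ N := by
    rw [← hIm1]
    exact (Complex.abs_im_le_norm _).trans h2
  rw [hnorm] at habs_re habs_im
  rw [mul_one] at habs_re habs_im
  -- final arithmetic
  have he : 0 < |η| := abs_pos.mpr hη
  have hm2 : 2 * |m| ≤ N + |η| := by
    have : |2 * m| ≤ |2 * m - η * 1| + |η * 1| := by
      have := abs_sub_abs_le_abs_sub (2 * m) (η * 1)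
      have h := abs_add_le (2 * m - η * 1) (η * 1)
      calc |2 * m| = |(2 * m - η * 1) + η * 1| := by ring_nf
        _ ≤ |2 * m - η * 1| + |η * 1| := abs_add_le _ _
    simp only [mul_one] at this
    rw [abs_mul] at this
    simp only [abs_two] at this
    linarith [habs_im, this]
  have hma : |η| * a ≤ N + |m| := by
    have h3 : |η * a| ≤ |m - η * a| + |m| := by
      calc |η * a| = |m - (m - η * a)| := by ring_nf
        _ ≤ |m| + |m - η * a| := abs_sub _ _
        _ = |m - η * a| + |m| := by ring
    rw [abs_mul, abs_of_nonneg ha0] at h3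
    linarith [habs_im1]
  have hcN : c - σ ≤ N := by
    have := abs_le.mp habs_re
    linarith [this.1]
  -- conclude
  have hden : 0 < 1 + 3 * α / |η| := by positivity
  rw [div_le_iff₀ hden]
  have hkey : (α - σ) * |η| ≤ N * (|η| + 3 * α) := by
    have h2eb : |η| - 3 * N ≤ 2 * |η| * b := by
      have : 2 * (|η| * a) ≤ 3 * N + |η| := by linarith
      nlinarith [hnorm]
    have hc2 : 2 * α * b ≤ N + σ := by linarith
    nlinarith [mul_le_mul_of_nonneg_left h2eb hα.le, mul_le_mul_of_nonneg_left hc2 he.le]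
  have h3 : (α - σ) * |η| ≤ (N * (1 + 3 * α / |η|)) * |η| := by
    calc (α - σ) * |η| ≤ N * (|η| + 3 * α) := hkey
      _ = (N * (1 + 3 * α / |η|)) * |η| := by field_simp
  exact le_of_mul_le_mul_right h3 he
end

section
/- Let n ≥ 1 and let μ be the root of L_n^{(1)}(-2μ) = 0 closest to zero (i.e. the largest negative root). Then |μ| ≤ 3/(n+2). -/
/-- The associated Laguerre polynomial L_n^{(β)}(x) = Σ_{k=0}^n (-1)^k C(n+β, n-k) x^k / k!
(real version). -/
noncomputable def laguerreR (β n : ℕ) (x : ℝ) : ℝ :=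
  ∑ k ∈ Finset.range (n + 1),
    (-1 : ℝ) ^ k * ((n + β).choose (n - k) : ℝ) * x ^ k / (Nat.factorial k : ℝ)

private lemma lag_choose_cast (n k : ℕ) (hk : k ≤ n) :
    ((n+1).choose (n-k) : ℝ) = ((n+1).descFactorial (k+1) : ℝ) / ((k+1).factorial : ℝ) := by
  rw [show n - k = (n+1)-(k+1) from by omega, Nat.choose_symm (by omega),
    Nat.descFactorial_eq_factorial_mul_choose]
  push_cast
  rw [mul_comm, mul_div_assoc, div_self (by positivity), mul_one]

set_option maxHeartbeats 2000000 in
/-- Key sign lemma: L_n^{(1)}(6/(n+2)) ≤ 0 for n ≥ 1. -/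
private lemma lag_key (n : ℕ) (hn : 1 ≤ n) : laguerreR 1 n (6 / ((n : ℝ) + 2)) ≤ 0 := by
  by_cases hn6 : n < 6
  · interval_cases n <;>
      norm_num [laguerreR, Finset.sum_range_succ, Nat.factorial, Nat.choose]
  push_neg at hn6
  set x : ℝ := (n : ℝ) with hxdef
  have hx6 : (6 : ℝ) ≤ x := by rw [hxdef]; exact_mod_cast hn6
  have hx2 : (0 : ℝ) < x + 2 := by linarith
  set t : ℝ := 6 / (x + 2) with htdef
  have ht0 : 0 < t := by positivity
  set b : ℕ → ℝ := fun k => ((n+1).choose (n-k) : ℝ) * t ^ k / (k.factorial : ℝ) with hbdef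
  have hbnn : ∀ k, 0 ≤ b k := by
    intro k
    have h1 : (0:ℝ) ≤ ((n+1).choose (n-k) : ℝ) := by positivity
    have h2 : (0:ℝ) < (k.factorial : ℝ) := by positivity
    positivity
  have hlag : laguerreR 1 n (6 / (x + 2)) = ∑ k ∈ Finset.range (n+1), (-1:ℝ)^k * b k := by
    unfold laguerreR
    apply Finset.sum_congr rfl
    intro k _
    simp only [hbdef, ← htdef]
    ring
  -- ratio bound
  have hratio : ∀ k, 2 ≤ k → k < n → b (k+1) ≤ b k / 2 := by
    intro k hk2 hkn
    have hcast : ((n+1).choose (n-(k+1)) : ℝ) * ((k:ℝ)+2) =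
        ((n+1).choose (n-k) : ℝ) * ((n - k : ℕ) : ℝ) := by
      have h := Nat.choose_succ_right_eq (n+1) (n-k-1)
      rw [show n - k - 1 + 1 = n - k from by omega,
        show n + 1 - (n - k - 1) = k + 2 from by omega] at h
      rw [show n - (k+1) = n - k - 1 from by omega]
      exact_mod_cast h.symm
    have hm : ((n - k : ℕ) : ℝ) ≤ x := by
      rw [hxdef]; exact_mod_cast Nat.sub_le n k
    have hmnn : (0:ℝ) ≤ ((n - k : ℕ) : ℝ) := by positivity
    have heq : b (k+1) = b k * (((n - k : ℕ) : ℝ) * t / (((k:ℝ)+1) * ((k:ℝ)+2))) := by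
      simp only [hbdef]
      have hfac : (((k+1).factorial : ℕ) : ℝ) = ((k:ℝ)+1) * (k.factorial : ℝ) := by
        push_cast [Nat.factorial_succ]; ring
      have hfk : (0:ℝ) < (k.factorial : ℝ) := by positivity
      have hC : ((n+1).choose (n-(k+1)) : ℝ) =
          ((n+1).choose (n-k) : ℝ) * ((n - k : ℕ) : ℝ) / ((k:ℝ)+2) := by
        field_simp at hcast ⊢
        linarith [hcast]
      rw [hC, hfac, pow_succ]
      field_simp
    have hrat : ((n - k : ℕ) : ℝ) * t / (((k:ℝ)+1) * ((k:ℝ)+2)) ≤ 1/2 := by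
      have hk2' : (2:ℝ) ≤ (k:ℝ) := by exact_mod_cast hk2
      have h12 : (12:ℝ) ≤ ((k:ℝ)+1) * ((k:ℝ)+2) := by nlinarith
      have hnum : ((n - k : ℕ) : ℝ) * t ≤ 6 := by
        have h1 : ((n - k : ℕ) : ℝ) * t ≤ x * t :=
          mul_le_mul_of_nonneg_right hm (le_of_lt ht0)
        have h2 : x * t ≤ 6 := by
          rw [htdef, mul_comm, div_mul_eq_mul_div, div_le_iff₀ hx2]
          linarith
        linarith
      rw [div_le_iff₀ (by positivity)]
      nlinarith
    calc b (k+1) = b k * (((n - k : ℕ) : ℝ) * t / (((k:ℝ)+1) * ((k:ℝ)+2))) := heq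
      _ ≤ b k * (1/2) := mul_le_mul_of_nonneg_left hrat (hbnn k)
      _ = b k / 2 := by ring
  -- geometric decay past k = 6
  have hgeom : ∀ j, 6 + j ≤ n → b (6 + j) ≤ b 6 / 2 ^ j := by
    intro j
    induction j with
    | zero => intro _; simp
    | succ j ih =>
        intro hj
        have h1 : b (6 + j + 1) ≤ b (6 + j) / 2 := hratio (6 + j) (by omega) (by omega)
        have h2 : b (6 + j) ≤ b 6 / 2 ^ j := ih (by omega)
        have : b (6 + (j+1)) = b (6 + j + 1) := by ring_nf
        rw [this, pow_succ]
        have h3 : b (6 + j) / 2 ≤ b 6 / 2 ^ j / 2 := by linarith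
        calc b (6+j+1) ≤ b (6+j) / 2 := h1
          _ ≤ b 6 / 2 ^ j / 2 := h3
          _ = b 6 / (2 ^ j * 2) := by ring
  -- tail bound
  have htail : ∑ k ∈ Finset.Ico 6 (n+1), (-1:ℝ)^k * b k ≤ 2 * b 6 := by
    have h1 : ∑ k ∈ Finset.Ico 6 (n+1), (-1:ℝ)^k * b k ≤ ∑ k ∈ Finset.Ico 6 (n+1), b k := by
      apply Finset.sum_le_sum
      intro k _
      have h : ((-1:ℝ))^k ≤ 1 := by
        rcases Nat.even_or_odd k with he | ho
        · rw [he.neg_one_pow]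
        · rw [ho.neg_one_pow]; linarith
      calc (-1:ℝ)^k * b k ≤ 1 * b k := mul_le_mul_of_nonneg_right h (hbnn k)
        _ = b k := one_mul _
    have h2 : ∑ k ∈ Finset.Ico 6 (n+1), b k ≤ 2 * b 6 := by
      rw [Finset.sum_Ico_eq_sum_range]
      have h3 : ∑ j ∈ Finset.range (n+1-6), b (6+j) ≤
          ∑ j ∈ Finset.range (n+1-6), b 6 / 2 ^ j := by
        apply Finset.sum_le_sum
        intro j hj
        exact hgeom j (by simp [Finset.mem_range] at hj; omega)
      have h4 : ∑ j ∈ Finset.range (n+1-6), b 6 / 2 ^ j =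
          b 6 * ∑ j ∈ Finset.range (n+1-6), (1/2:ℝ) ^ j := by
        rw [Finset.mul_sum]
        apply Finset.sum_congr rfl
        intro j _
        rw [div_pow, one_pow]
        ring
      have h5 : ∑ j ∈ Finset.range (n+1-6), (1/2:ℝ) ^ j ≤ 2 := by
        rw [geom_sum_eq (by norm_num : (1/2:ℝ) ≠ 1)]
        rw [div_le_iff_of_neg (by norm_num : (1/2:ℝ) - 1 < 0)]
        have : (0:ℝ) ≤ (1/2:ℝ) ^ (n+1-6) := by positivity
        linarith
      calc ∑ j ∈ Finset.range (n+1-6), b (6+j)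
          ≤ b 6 * ∑ j ∈ Finset.range (n+1-6), (1/2:ℝ) ^ j := by rw [← h4]; exact h3
        _ ≤ b 6 * 2 := mul_le_mul_of_nonneg_left h5 (hbnn 6)
        _ = 2 * b 6 := by ring
    linarith
  -- split of the sum
  have hsplit : ∑ k ∈ Finset.range (n+1), (-1:ℝ)^k * b k =
      (∑ k ∈ Finset.range 6, (-1:ℝ)^k * b k) + ∑ k ∈ Finset.Ico 6 (n+1), (-1:ℝ)^k * b k := by
    rw [Finset.range_eq_Ico, ← Finset.sum_Ico_consecutive _ (Nat.zero_le 6) (by omega : 6 ≤ n+1),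
      ← Finset.range_eq_Ico]
  have hhead : ∑ k ∈ Finset.range 6, (-1:ℝ)^k * b k =
      b 0 - b 1 + b 2 - b 3 + b 4 - b 5 := by
    simp [Finset.sum_range_succ]
    norm_num
    try ring
  -- explicit descFactorial values
  have hd1 : ((n+1).descFactorial 1 : ℝ) = x + 1 := by
    simp [Nat.descFactorial, hxdef]
  have hd2 : ((n+1).descFactorial 2 : ℝ) = x * (x + 1) := by
    simp [Nat.descFactorial, hxdef]
    try push_cast
    try ring
  have hd3 : ((n+1).descFactorial 3 : ℝ) = (x-1) * x * (x + 1) := by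
    simp [Nat.descFactorial, hxdef]
    push_cast [Nat.cast_sub (by omega : 1 ≤ n)]
    ring
  have hd4 : ((n+1).descFactorial 4 : ℝ) = (x-2) * (x-1) * x * (x + 1) := by
    simp [Nat.descFactorial, hxdef]
    push_cast [Nat.cast_sub (by omega : 1 ≤ n), Nat.cast_sub (by omega : 2 ≤ n)]
    ring
  have hd5 : ((n+1).descFactorial 5 : ℝ) = (x-3) * (x-2) * (x-1) * x * (x + 1) := by
    simp [Nat.descFactorial, hxdef]
    push_cast [Nat.cast_sub (by omega : 1 ≤ n), Nat.cast_sub (by omega : 2 ≤ n),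
      Nat.cast_sub (by omega : 3 ≤ n)]
    ring
  have hd6 : ((n+1).descFactorial 6 : ℝ) = (x-4) * (x-3) * (x-2) * (x-1) * x * (x + 1) := by
    simp [Nat.descFactorial, hxdef]
    push_cast [Nat.cast_sub (by omega : 1 ≤ n), Nat.cast_sub (by omega : 2 ≤ n),
      Nat.cast_sub (by omega : 3 ≤ n), Nat.cast_sub (by omega : 4 ≤ n)]
    ring
  have hd7 : ((n+1).descFactorial 7 : ℝ) = (x-5) * (x-4) * (x-3) * (x-2) * (x-1) * x * (x + 1) := by
    simp [Nat.descFactorial, hxdef]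
    push_cast [Nat.cast_sub (by omega : 1 ≤ n), Nat.cast_sub (by omega : 2 ≤ n),
      Nat.cast_sub (by omega : 3 ≤ n), Nat.cast_sub (by omega : 4 ≤ n),
      Nat.cast_sub (by omega : 5 ≤ n)]
    ring
  -- closed forms for b 0 .. b 6
  have hb0 : b 0 = x + 1 := by
    simp only [hbdef]
    rw [lag_choose_cast n 0 (by omega), hd1]
    norm_num [Nat.factorial]
  have hb1 : b 1 = x * (x+1) / 2 * t := by
    simp only [hbdef]
    rw [lag_choose_cast n 1 (by omega), hd2]
    norm_num [Nat.factorial]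
    try ring
  have hb2 : b 2 = (x-1) * x * (x+1) / 12 * t^2 := by
    simp only [hbdef]
    rw [lag_choose_cast n 2 (by omega), hd3]
    norm_num [Nat.factorial]
    try ring
  have hb3 : b 3 = (x-2) * (x-1) * x * (x+1) / 144 * t^3 := by
    simp only [hbdef]
    rw [lag_choose_cast n 3 (by omega), hd4]
    norm_num [Nat.factorial]
    try ring
  have hb4 : b 4 = (x-3) * (x-2) * (x-1) * x * (x+1) / 2880 * t^4 := by
    simp only [hbdef]
    rw [lag_choose_cast n 4 (by omega), hd5]
    norm_num [Nat.factorial]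
    try ring
  have hb5 : b 5 = (x-4) * (x-3) * (x-2) * (x-1) * x * (x+1) / 86400 * t^5 := by
    simp only [hbdef]
    rw [lag_choose_cast n 5 (by omega), hd6]
    norm_num [Nat.factorial]
    try ring
  have hb6 : b 6 = (x-5) * (x-4) * (x-3) * (x-2) * (x-1) * x * (x+1) / 3628800 * t^6 := by
    simp only [hbdef]
    rw [lag_choose_cast n 6 (by omega), hd7]
    norm_num [Nat.factorial]
    try ring
  -- the polynomial inequality
  have hpoly : 44800 + 48856*x - 13524*x^2 - 40880*x^3 - 29750*x^4 - 7896*x^5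
      - 1526*x^6 - 80*x^7 ≤ 0 := by
    have h0 : (0:ℝ) ≤ x := by linarith
    have h1 : 6*x ≤ x^2 := by nlinarith
    have h2 : (0:ℝ) ≤ x^3 := by positivity
    have h3 : (0:ℝ) ≤ x^4 := by positivity
    have h4 : (0:ℝ) ≤ x^5 := by positivity
    have h5 : (0:ℝ) ≤ x^6 := by positivity
    have h6 : (0:ℝ) ≤ x^7 := by positivity
    nlinarith
  have hfinal : b 0 - b 1 + b 2 - b 3 + b 4 - b 5 + 2 * b 6 ≤ 0 := by
    rw [hb0, hb1, hb2, hb3, hb4, hb5, hb6, htdef]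
    have heq : (x + 1) - x*(x+1)/2 * (6/(x+2)) + (x-1)*x*(x+1)/12 * (6/(x+2))^2
        - (x-2)*(x-1)*x*(x+1)/144 * (6/(x+2))^3
        + (x-3)*(x-2)*(x-1)*x*(x+1)/2880 * (6/(x+2))^4
        - (x-4)*(x-3)*(x-2)*(x-1)*x*(x+1)/86400 * (6/(x+2))^5
        + 2 * ((x-5)*(x-4)*(x-3)*(x-2)*(x-1)*x*(x+1)/3628800 * (6/(x+2))^6)
        = (44800 + 48856*x - 13524*x^2 - 40880*x^3 - 29750*x^4 - 7896*x^5
            - 1526*x^6 - 80*x^7) / (700 * (x+2)^6) := by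
      field_simp
      ring
    rw [heq]
    apply div_nonpos_of_nonpos_of_nonneg hpoly
    positivity
  -- assemble
  have hIco : ∑ k ∈ Finset.Ico 6 (n+1), (-1:ℝ)^k * b k ≤ 2 * b 6 := htail
  rw [hlag, hsplit, hhead]
  linarith

/-- If μ is the largest negative root of L_n^{(1)}(-2μ) = 0 (n ≥ 1), then |μ| ≤ 3/(n+2). -/
theorem largest_root_bound
    (n : ℕ) (hn : 1 ≤ n) (μ : ℝ) (hμ : μ < 0)
    (hroot : laguerreR 1 n (-2 * μ) = 0)
    (hmax : ∀ μ' : ℝ, μ' < 0 → laguerreR 1 n (-2 * μ') = 0 → μ' ≤ μ) :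
    |μ| ≤ 3 / (n + 2) := by
  have hn2 : (0:ℝ) < (n:ℝ) + 2 := by positivity
  set s : ℝ := 6 / ((n:ℝ) + 2) with hsdef
  have hs0 : 0 < s := by positivity
  have hcont : Continuous (laguerreR 1 n) := by
    unfold laguerreR; fun_prop
  have hf0 : laguerreR 1 n 0 = (n:ℝ) + 1 := by
    unfold laguerreR
    rw [Finset.sum_eq_single 0]
    · simp [Nat.choose_succ_self_right]
    · intro k _ hk
      simp [zero_pow hk]
    · simp
  have hfs : laguerreR 1 n s ≤ 0 := lag_key n hn
  have hmem : (0:ℝ) ∈ Set.Icc (laguerreR 1 n s) (laguerreR 1 n 0) := by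
    constructor
    · exact hfs
    · rw [hf0]; positivity
  obtain ⟨c, hc, hfc⟩ := intermediate_value_Icc' (le_of_lt hs0) hcont.continuousOn hmem
  have hc0 : c ≠ 0 := by
    intro h
    rw [h, hf0] at hfc
    have : (0:ℝ) < (n:ℝ) + 1 := by positivity
    linarith
  have hcpos : 0 < c := lt_of_le_of_ne hc.1 (Ne.symm hc0)
  have hμ'neg : -(c/2) < 0 := by linarith
  have hrootc : laguerreR 1 n (-2 * -(c/2)) = 0 := by
    rw [show -2 * -(c/2) = c by ring]; exact hfc
  have hle := hmax (-(c/2)) hμ'neg hrootc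
  have hcs : c ≤ s := hc.2
  rw [abs_of_neg hμ]
  rw [hsdef] at hcs
  have h63 : 6/((n:ℝ)+2) = 2*(3/((n:ℝ)+2)) := by ring
  linarith
end

section
/- Let λ ∈ ℂ with λ ≠ 0 and let M(a,b,z) denote the Kummer confluent hypergeometric function. Then the function f_λ(x) = x e^{λx} M(1-α, 2, -2λx) satisfies f_λ(0) = 0 and solves the ODE -f'' + (2λα/x)f + λ²f = 0 on (0,1); moreover f_λ(1) = 0 if and only if M(1-α, 2, -2λ) = 0. -/
open Set Finset

/-- The Kummer confluent hypergeometric function M(a,b,z) = Σ_{k≥0} (a)_k z^k / ((b)_k k!). -/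
noncomputable def kummerM (a b z : ℂ) : ℂ :=
  ∑' k : ℕ,
    (∏ i ∈ Finset.range k, (a + i)) /
      ((∏ i ∈ Finset.range k, (b + i)) * (Nat.factorial k : ℂ)) * z ^ k

/-- Coefficient of the Kummer series with b = 2. -/
noncomputable def kc (a : ℂ) (k : ℕ) : ℂ :=
  (∏ i ∈ Finset.range k, (a + i)) /
    ((∏ i ∈ Finset.range k, ((2:ℂ) + i)) * (Nat.factorial k : ℂ))

noncomputable def kv (a lam : ℂ) (k : ℕ) : ℂ := (-2*lam)^k * kc a k

noncomputable def kg (a lam : ℂ) (k : ℕ) (x : ℝ) : ℂ :=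
  kv a lam k * ((x:ℂ)^(k+1) * Complex.exp (lam*x))

noncomputable def kg1 (a lam : ℂ) (k : ℕ) (x : ℝ) : ℂ :=
  kv a lam k * (((((k:ℂ)+1) * (x:ℂ)^k + lam * (x:ℂ)^(k+1))) * Complex.exp (lam*x))

noncomputable def kg2 (a lam : ℂ) (k : ℕ) (x : ℝ) : ℂ :=
  kv a lam k * (((((k:ℂ)+1)*(k:ℂ)) * (x:ℂ)^(k-1) + 2*lam*((k:ℂ)+1)*(x:ℂ)^k
      + lam^2*(x:ℂ)^(k+1)) * Complex.exp (lam*x))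

lemma hasDerivAt_kg (a lam : ℂ) (k : ℕ) (x : ℝ) :
    HasDerivAt (kg a lam k) (kg1 a lam k x) x := by
  have he : HasDerivAt (fun z : ℂ => Complex.exp (lam*z))
      (Complex.exp (lam*(x:ℂ)) * (lam * 1)) (x:ℂ) :=
    ((hasDerivAt_id (x:ℂ)).const_mul lam).cexp
  have h := ((hasDerivAt_pow (k+1) (x:ℂ)).mul he).const_mul (kv a lam k)
  have h2 : HasDerivAt (fun z : ℂ => kv a lam k * (z^(k+1) * Complex.exp (lam*z)))
      (kg1 a lam k x) (x:ℂ) := by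
    refine h.congr_deriv ?_
    simp only [kg1, Nat.add_sub_cancel]
    push_cast
    ring
  exact h2.comp_ofReal

lemma hasDerivAt_kg1 (a lam : ℂ) (k : ℕ) (x : ℝ) :
    HasDerivAt (kg1 a lam k) (kg2 a lam k x) x := by
  have he : HasDerivAt (fun z : ℂ => Complex.exp (lam*z))
      (Complex.exp (lam*(x:ℂ)) * (lam * 1)) (x:ℂ) :=
    ((hasDerivAt_id (x:ℂ)).const_mul lam).cexp
  have hp : HasDerivAt (fun z : ℂ => ((k:ℂ)+1) * z^k + lam * z^(k+1))
      (((k:ℂ)+1) * ((k:ℕ) * (x:ℂ)^(k-1)) + lam * (((k:ℕ)+1 : ℕ) * (x:ℂ)^(k+1-1))) (x:ℂ) :=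
    ((hasDerivAt_pow k (x:ℂ)).const_mul ((k:ℂ)+1)).add
      ((hasDerivAt_pow (k+1) (x:ℂ)).const_mul lam)
  have h := (hp.mul he).const_mul (kv a lam k)
  have h2 : HasDerivAt (fun z : ℂ =>
      kv a lam k * ((((k:ℂ)+1) * z^k + lam * z^(k+1)) * Complex.exp (lam*z)))
      (kg2 a lam k x) (x:ℂ) := by
    refine h.congr_deriv ?_
    simp only [kg2, Nat.add_sub_cancel]
    push_cast
    ring
  exact h2.comp_ofReal

lemma kc_succ (a : ℂ) (k : ℕ) :
    ((k:ℂ)+2) * ((k:ℂ)+1) * kc a (k+1) = (a+k) * kc a k := by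
  have h1 : (∏ i ∈ Finset.range k, ((2:ℂ)+i)) ≠ 0 := by
    refine Finset.prod_ne_zero_iff.mpr fun i _ => ?_
    have : ((2:ℂ)+i) = ((2+i : ℕ) : ℂ) := by push_cast; ring
    rw [this]
    exact Nat.cast_ne_zero.mpr (by omega)
  have h2 : ((Nat.factorial k : ℂ)) ≠ 0 := Nat.cast_ne_zero.mpr (Nat.factorial_ne_zero k)
  have h2' : ((Nat.factorial (k+1) : ℂ)) ≠ 0 := Nat.cast_ne_zero.mpr (Nat.factorial_ne_zero _)
  have h3 : ((2:ℂ)+(k:ℂ)) ≠ 0 := by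
    have : ((2:ℂ)+k) = ((2+k : ℕ) : ℂ) := by push_cast; ring
    rw [this]; exact Nat.cast_ne_zero.mpr (by omega)
  simp only [kc, Finset.prod_range_succ]
  field_simp
  push_cast [Nat.factorial_succ]
  ring

lemma kv_succ (a lam : ℂ) (k : ℕ) :
    ((k:ℂ)+2) * ((k:ℂ)+1) * kv a lam (k+1) = (-2*lam) * (a+k) * kv a lam k := by
  simp only [kv]
  linear_combination ((-2*lam)^(k+1)) * kc_succ a k

noncomputable def kC (lam : ℂ) : ℝ := 8 * Real.exp (2*‖lam‖) * (1+2*‖lam‖+‖lam‖^2)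
noncomputable def kD (a lam : ℂ) : ℝ := 16*‖lam‖*(‖a‖+2)
noncomputable def kU (a lam : ℂ) (k : ℕ) : ℝ := kC lam * kD a lam ^ k / (Nat.factorial k)

lemma kU_summable (a lam : ℂ) : Summable (kU a lam) := by
  have h := (Real.summable_pow_div_factorial (kD a lam)).mul_left (kC lam)
  have he : kU a lam = fun k => kC lam * (kD a lam ^ k / (Nat.factorial k)) := by
    funext k; rw [kU, mul_div_assoc]
  rw [he]; exact h

lemma kummer_prod_norm_le (a : ℂ) (k : ℕ) :
    ‖∏ i ∈ Finset.range k, (a + i)‖ ≤ (‖a‖+2)^k * (Nat.factorial k) := by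
  induction k with
  | zero => simp
  | succ k ih =>
    rw [Finset.prod_range_succ, norm_mul, pow_succ, Nat.factorial_succ]
    have h1 : ‖a + (k:ℂ)‖ ≤ ‖a‖ + k := by
      refine (norm_add_le _ _).trans ?_
      simp
    have h2 : ‖a‖ + (k:ℝ) ≤ (‖a‖+2) * ((k:ℝ)+1) := by
      nlinarith [norm_nonneg a, Nat.cast_nonneg (α := ℝ) k]
    calc ‖∏ i ∈ Finset.range k, (a + i)‖ * ‖a + (k:ℂ)‖
        ≤ ((‖a‖+2)^k * (Nat.factorial k)) * ((‖a‖+2) * ((k:ℝ)+1)) := by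
          apply mul_le_mul ih (h1.trans h2) (norm_nonneg _)
          positivity
      _ = (‖a‖+2)^k * (‖a‖+2) * (((k:ℝ)+1) * (Nat.factorial k)) := by ring
      _ = (‖a‖+2)^k * (‖a‖+2) * ((Nat.factorial (k+1) : ℕ) : ℝ) := by
          rw [Nat.factorial_succ]; push_cast; ring
      _ ≤ (‖a‖+2)^k * (‖a‖+2) * ((Nat.factorial (k+1) : ℕ) : ℝ) := le_refl _

lemma fact_le_prod (k : ℕ) : ((Nat.factorial k : ℕ) : ℝ) ≤ ∏ i ∈ Finset.range k, (2 + (i:ℝ)) := by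
  induction k with
  | zero => simp
  | succ k ih =>
    rw [Finset.prod_range_succ, Nat.factorial_succ]
    push_cast
    have hk : (0:ℝ) ≤ k := Nat.cast_nonneg k
    have h1 : (0:ℝ) < Nat.factorial k := by exact_mod_cast Nat.factorial_pos k
    nlinarith [ih]

lemma norm_kv_le (a lam : ℂ) (k : ℕ) :
    ‖kv a lam k‖ ≤ (2*‖lam‖*(‖a‖+2))^k / (Nat.factorial k) := by
  have hQ : ‖∏ i ∈ Finset.range k, ((2:ℂ) + i)‖ = ∏ i ∈ Finset.range k, (2 + (i:ℝ)) := by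
    rw [norm_prod]
    refine Finset.prod_congr rfl fun i _ => ?_
    have : ((2:ℂ)+i) = (((2+i:ℕ)):ℂ) := by push_cast; ring
    rw [this, Complex.norm_natCast]; push_cast; ring
  have hfp : (0:ℝ) < Nat.factorial k := by exact_mod_cast Nat.factorial_pos k
  have hden : ((Nat.factorial k : ℝ)) * (Nat.factorial k : ℝ) ≤
      ‖(∏ i ∈ Finset.range k, ((2:ℂ) + i)) * (Nat.factorial k : ℂ)‖ := by
    rw [norm_mul, hQ, Complex.norm_natCast]
    exact mul_le_mul_of_nonneg_right (fact_le_prod k) (le_of_lt hfp)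
  have hnum := kummer_prod_norm_le a k
  have h1 : ‖kc a k‖ ≤ (‖a‖+2)^k / (Nat.factorial k) := by
    rw [kc, norm_div]
    calc ‖∏ i ∈ Finset.range k, (a + i)‖ / ‖(∏ i ∈ Finset.range k, ((2:ℂ) + i)) * (Nat.factorial k : ℂ)‖
        ≤ ((‖a‖+2)^k * (Nat.factorial k)) / ((Nat.factorial k : ℝ) * (Nat.factorial k)) := by
          apply div_le_div₀ (by positivity) hnum (by positivity) hden
      _ = (‖a‖+2)^k / (Nat.factorial k) := by
          rw [mul_div_mul_right _ _ (ne_of_gt hfp)]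
  have h2 : ‖(-2*lam)^k‖ = (2*‖lam‖)^k := by
    rw [norm_pow]
    congr 1
    rw [norm_mul]
    simp
  calc ‖kv a lam k‖ = ‖(-2*lam)^k‖ * ‖kc a k‖ := by rw [kv, norm_mul]
    _ ≤ (2*‖lam‖)^k * ((‖a‖+2)^k / (Nat.factorial k)) := by
        apply mul_le_mul (le_of_eq h2) h1 (norm_nonneg _) (by positivity)
    _ = (2*‖lam‖*(‖a‖+2))^k / (Nat.factorial k) := by
        rw [mul_pow (2*‖lam‖)]
        ring

lemma sq_le_pow4 (k : ℕ) : ((k:ℝ)+2)^2 ≤ 4 * 4^k := by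
  induction k with
  | zero => norm_num
  | succ k ih =>
    have hk : (0:ℝ) ≤ k := Nat.cast_nonneg k
    push_cast
    rw [pow_succ 4 k]
    nlinarith [ih]

lemma norm_le_kU (a lam : ℂ) (k : ℕ) (y : ℝ) (hy : |y| ≤ 2) (w : ℂ)
    (hw : ‖w‖ ≤ (1+2*‖lam‖+‖lam‖^2) * (((k:ℝ)+2)^2 * 2^(k+1))) :
    ‖kv a lam k * (w * Complex.exp (lam*y))‖ ≤ kU a lam k := by
  have hL : (0:ℝ) ≤ ‖lam‖ := norm_nonneg _
  have hA : (0:ℝ) ≤ ‖a‖ := norm_nonneg _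
  have hfp : (0:ℝ) < Nat.factorial k := by exact_mod_cast Nat.factorial_pos k
  have hexp : ‖Complex.exp (lam*y)‖ ≤ Real.exp (2*‖lam‖) := by
    rw [Complex.norm_exp]
    apply Real.exp_le_exp.mpr
    calc (lam*(y:ℂ)).re ≤ ‖lam*(y:ℂ)‖ := Complex.re_le_norm _
      _ = ‖lam‖ * |y| := by rw [norm_mul, Complex.norm_real, Real.norm_eq_abs]
      _ ≤ ‖lam‖ * 2 := mul_le_mul_of_nonneg_left hy hL
      _ = 2*‖lam‖ := by ring
  have h8 : ((k:ℝ)+2)^2 * 2^(k+1) ≤ 8 * 8^k := by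
    calc ((k:ℝ)+2)^2 * 2^(k+1) ≤ (4*4^k) * 2^(k+1) := by
          apply mul_le_mul_of_nonneg_right (sq_le_pow4 k) (by positivity)
      _ = 8 * ((4:ℝ)^k * 2^k) := by rw [pow_succ]; ring
      _ = 8 * 8^k := by rw [← mul_pow]; norm_num
  have hB : (0:ℝ) ≤ 2*‖lam‖*(‖a‖+2) := by positivity
  calc ‖kv a lam k * (w * Complex.exp (lam*y))‖
      = ‖kv a lam k‖ * (‖w‖ * ‖Complex.exp (lam*y)‖) := by rw [norm_mul, norm_mul]
    _ ≤ ((2*‖lam‖*(‖a‖+2))^k / (Nat.factorial k)) *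
        (((1+2*‖lam‖+‖lam‖^2) * (((k:ℝ)+2)^2 * 2^(k+1))) * Real.exp (2*‖lam‖)) := by
        apply mul_le_mul (norm_kv_le a lam k)
          (mul_le_mul hw hexp (norm_nonneg _) (by positivity)) (by positivity) (by positivity)
    _ ≤ ((2*‖lam‖*(‖a‖+2))^k / (Nat.factorial k)) *
        (((1+2*‖lam‖+‖lam‖^2) * (8*8^k)) * Real.exp (2*‖lam‖)) := by
        apply mul_le_mul_of_nonneg_left _ (by positivity)
        apply mul_le_mul_of_nonneg_right _ (by positivity)
        apply mul_le_mul_of_nonneg_left h8 (by positivity)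
    _ = kU a lam k := by
        rw [kU, kC, kD]
        rw [show (16*‖lam‖*(‖a‖+2)) = 8 * (2*‖lam‖*(‖a‖+2)) by ring, mul_pow (8:ℝ)]
        field_simp

lemma norm_natCast_add_one (k : ℕ) : ‖((k:ℂ)+1)‖ = (k:ℝ)+1 := by
  rw [show ((k:ℂ)+1) = (((k+1:ℕ)):ℂ) by push_cast; ring, Complex.norm_natCast]
  push_cast; ring

lemma hpow_le (j k : ℕ) (y : ℝ) (hj : j ≤ k+1) (hy : |y| ≤ 2) : ‖(y:ℂ)^j‖ ≤ 2^(k+1) := by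
  rw [norm_pow, Complex.norm_real, Real.norm_eq_abs]
  calc |y|^j ≤ 2^j := pow_le_pow_left₀ (abs_nonneg y) hy j
    _ ≤ 2^(k+1) := pow_le_pow_right₀ one_le_two hj

/-- The function f_λ(x) = x e^{λx} M(1-α, 2, -2λx) satisfies f_λ(0) = 0, solves
-f'' + (2λα/x)f + λ²f = 0 on (0,1), and f_λ(1) = 0 iff M(1-α, 2, -2λ) = 0. -/
theorem kummer_eigenfunction
    (α : ℝ) (hα : 0 < α) (lam : ℂ) (hlam : lam ≠ 0)
    (f : ℝ → ℂ)
    (hf : f = fun x : ℝ => (x : ℂ) * Complex.exp (lam * x) * kummerM (1 - α) 2 (-2 * lam * x)) :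
    f 0 = 0 ∧
    (∀ x ∈ Ioo (0:ℝ) 1,
        -(deriv (deriv f) x) + (2 * lam * α / (x : ℂ)) * f x + lam ^ 2 * f x = 0) ∧
    (f 1 = 0 ↔ kummerM (1 - (α : ℂ)) 2 (-2 * lam) = 0) := by
  have hL : (0:ℝ) ≤ ‖lam‖ := norm_nonneg _
  have hker : ∀ z : ℂ, kummerM (1 - (α:ℂ)) 2 z = ∑' k, kc (1 - (α:ℂ)) k * z^k := fun z => rfl
  have hF : f = fun y : ℝ => ∑' k, kg (1 - (α:ℂ)) lam k y := by
    funext y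
    simp only [hf]
    rw [hker, ← tsum_mul_left]
    exact tsum_congr fun k => by simp only [kg, kv]; ring
  have h0 : f 0 = 0 := by rw [hf]; simp
  refine ⟨h0, ?_, ?_⟩
  · -- ODE part
    have hopen : IsOpen (Ioo (-2:ℝ) 2) := isOpen_Ioo
    have hconn : IsPreconnected (Ioo (-2:ℝ) 2) := isPreconnected_Ioo
    have habs : ∀ y ∈ Ioo (-2:ℝ) 2, |y| ≤ 2 := fun y hy => abs_le.mpr ⟨hy.1.le, hy.2.le⟩
    set a : ℂ := 1 - (α:ℂ) with ha
    have hbound_g : ∀ (k : ℕ) (y : ℝ), |y| ≤ 2 → ‖kg a lam k y‖ ≤ kU a lam k := by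
      intro k y hy
      apply norm_le_kU a lam k y hy
      have hk : (0:ℝ) ≤ k := Nat.cast_nonneg k
      calc ‖(y:ℂ)^(k+1)‖ ≤ 2^(k+1) := hpow_le (k+1) k y le_rfl hy
        _ ≤ ((1+2*‖lam‖+‖lam‖^2) * ((k:ℝ)+2)^2) * 2^(k+1) := by
            nth_rewrite 1 [← one_mul ((2:ℝ)^(k+1))]
            apply mul_le_mul_of_nonneg_right _ (by positivity)
            nlinarith [sq_nonneg ‖lam‖, mul_nonneg hL hk, mul_nonneg hk hk,
              mul_nonneg (mul_nonneg hL hL) hk, mul_nonneg hL (mul_nonneg hk hk),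
              mul_nonneg (mul_nonneg (mul_nonneg hL hL) hk) hk]
        _ = (1+2*‖lam‖+‖lam‖^2) * (((k:ℝ)+2)^2 * 2^(k+1)) := by ring
    have hbound_g1 : ∀ (k : ℕ) (y : ℝ), |y| ≤ 2 → ‖kg1 a lam k y‖ ≤ kU a lam k := by
      intro k y hy
      apply norm_le_kU a lam k y hy
      have hk : (0:ℝ) ≤ k := Nat.cast_nonneg k
      calc ‖((k:ℂ)+1) * (y:ℂ)^k + lam * (y:ℂ)^(k+1)‖
          ≤ ‖((k:ℂ)+1) * (y:ℂ)^k‖ + ‖lam * (y:ℂ)^(k+1)‖ := norm_add_le _ _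
        _ = ((k:ℝ)+1) * ‖(y:ℂ)^k‖ + ‖lam‖ * ‖(y:ℂ)^(k+1)‖ := by
            rw [norm_mul, norm_mul, norm_natCast_add_one]
        _ ≤ ((k:ℝ)+1) * 2^(k+1) + ‖lam‖ * 2^(k+1) := by
            gcongr
            · exact hpow_le k k y (Nat.le_succ k) hy
            · exact hpow_le (k+1) k y le_rfl hy
        _ = (((k:ℝ)+1) + ‖lam‖) * 2^(k+1) := by ring
        _ ≤ ((1+2*‖lam‖+‖lam‖^2) * ((k:ℝ)+2)^2) * 2^(k+1) := by
            apply mul_le_mul_of_nonneg_right _ (by positivity)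
            nlinarith [sq_nonneg ‖lam‖, sq_nonneg ((k:ℝ)+2), mul_nonneg hL hk,
              mul_nonneg hL (mul_nonneg hk hk), sq_nonneg ((k:ℝ)+1)]
        _ = (1+2*‖lam‖+‖lam‖^2) * (((k:ℝ)+2)^2 * 2^(k+1)) := by ring
    have hbound_g2 : ∀ (k : ℕ) (y : ℝ), |y| ≤ 2 → ‖kg2 a lam k y‖ ≤ kU a lam k := by
      intro k y hy
      apply norm_le_kU a lam k y hy
      have hk : (0:ℝ) ≤ k := Nat.cast_nonneg k
      calc ‖(((k:ℂ)+1)*(k:ℂ)) * (y:ℂ)^(k-1) + 2*lam*((k:ℂ)+1)*(y:ℂ)^k + lam^2*(y:ℂ)^(k+1)‖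
          ≤ ‖(((k:ℂ)+1)*(k:ℂ)) * (y:ℂ)^(k-1) + 2*lam*((k:ℂ)+1)*(y:ℂ)^k‖ + ‖lam^2*(y:ℂ)^(k+1)‖ :=
            norm_add_le _ _
        _ ≤ ‖(((k:ℂ)+1)*(k:ℂ)) * (y:ℂ)^(k-1)‖ + ‖2*lam*((k:ℂ)+1)*(y:ℂ)^k‖ + ‖lam^2*(y:ℂ)^(k+1)‖ := by
            gcongr
            exact norm_add_le _ _
        _ = ((k:ℝ)+1)*(k:ℝ) * ‖(y:ℂ)^(k-1)‖ + 2*‖lam‖*((k:ℝ)+1) * ‖(y:ℂ)^k‖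
            + ‖lam‖^2 * ‖(y:ℂ)^(k+1)‖ := by
            rw [norm_mul, norm_mul, norm_mul, norm_mul, norm_mul, norm_mul, norm_pow,
              norm_natCast_add_one, Complex.norm_natCast]
            norm_num
        _ ≤ ((k:ℝ)+1)*(k:ℝ) * 2^(k+1) + 2*‖lam‖*((k:ℝ)+1) * 2^(k+1) + ‖lam‖^2 * 2^(k+1) := by
            gcongr
            · exact hpow_le (k-1) k y (by omega) hy
            · exact hpow_le k k y (Nat.le_succ k) hy
            · exact hpow_le (k+1) k y le_rfl hy
        _ = (((k:ℝ)+1)*(k:ℝ) + 2*‖lam‖*((k:ℝ)+1) + ‖lam‖^2) * 2^(k+1) := by ring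
        _ ≤ ((1+2*‖lam‖+‖lam‖^2) * ((k:ℝ)+2)^2) * 2^(k+1) := by
            apply mul_le_mul_of_nonneg_right _ (by positivity)
            nlinarith [sq_nonneg ‖lam‖, sq_nonneg ((k:ℝ)+2), mul_nonneg hL hk,
              mul_nonneg hL (mul_nonneg hk hk), sq_nonneg ((k:ℝ)+1),
              mul_nonneg (mul_nonneg hL hL) hk, mul_nonneg (mul_nonneg (mul_nonneg hL hL) hk) hk]
        _ = (1+2*‖lam‖+‖lam‖^2) * (((k:ℝ)+2)^2 * 2^(k+1)) := by ring
    have hd1 : ∀ y ∈ Ioo (-2:ℝ) 2,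
        HasDerivAt (fun z => ∑' k, kg a lam k z) (∑' k, kg1 a lam k y) y := by
      intro y hy
      exact hasDerivAt_tsum_of_isPreconnected (kU_summable a lam) hopen hconn
        (fun n z _ => hasDerivAt_kg a lam n z)
        (fun n z hz => hbound_g1 n z (habs z hz))
        (y₀ := 0) (by norm_num)
        (Summable.of_norm_bounded (kU_summable a lam) (fun n => hbound_g n 0 (by norm_num)))
        hy
    have hd2 : ∀ y ∈ Ioo (-2:ℝ) 2,
        HasDerivAt (fun z => ∑' k, kg1 a lam k z) (∑' k, kg2 a lam k y) y := by
      intro y hy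
      exact hasDerivAt_tsum_of_isPreconnected (kU_summable a lam) hopen hconn
        (fun n z _ => hasDerivAt_kg1 a lam n z)
        (fun n z hz => hbound_g2 n z (habs z hz))
        (y₀ := 0) (by norm_num)
        (Summable.of_norm_bounded (kU_summable a lam) (fun n => hbound_g1 n 0 (by norm_num)))
        hy
    intro x hx
    have hxt : x ∈ Ioo (-2:ℝ) 2 := ⟨by linarith [hx.1], by linarith [hx.2]⟩
    have hxa : |x| ≤ 2 := habs x hxt
    have hx0 : (x:ℂ) ≠ 0 := Complex.ofReal_ne_zero.mpr (ne_of_gt hx.1)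
    have hfx : f x = ∑' k, kg a lam k x := by rw [hF]
    have hderiv1 : Set.EqOn (deriv f) (fun z => ∑' k, kg1 a lam k z) (Ioo (-2:ℝ) 2) := by
      intro y hy
      rw [hF]
      exact (hd1 y hy).deriv
    have hdd : deriv (deriv f) x = ∑' k, kg2 a lam k x := by
      have heq : deriv f =ᶠ[nhds x] (fun z => ∑' k, kg1 a lam k z) :=
        Filter.eventuallyEq_of_mem (hopen.mem_nhds hxt) hderiv1
      rw [heq.deriv_eq]
      exact (hd2 x hxt).deriv
    have Sg : Summable (fun k => kg a lam k x) :=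
      Summable.of_norm_bounded (kU_summable a lam) (fun k => hbound_g k x hxa)
    have Sg2 : Summable (fun k => kg2 a lam k x) :=
      Summable.of_norm_bounded (kU_summable a lam) (fun k => hbound_g2 k x hxa)
    set B : ℕ → ℂ := fun m =>
      kv a lam m * ((((m:ℂ)+1)*(m:ℂ) * (x:ℂ)^(m-1)) * Complex.exp (lam*x)) with hB
    have hterm : ∀ k : ℕ, -(kg2 a lam k x) +
        ((2*lam*(α:ℂ)/(x:ℂ)) * kg a lam k x + lam^2 * kg a lam k x) = B (k+1) - B k := by
      intro k
      have hs := kv_succ a lam k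
      have hBk1 : B (k+1) = ((-2*lam) * (a+(k:ℂ)) * kv a lam k)
          * ((x:ℂ)^k * Complex.exp (lam*(x:ℂ))) := by
        simp only [hB, Nat.add_sub_cancel]
        push_cast
        calc kv a lam (k+1) * ((((k:ℂ)+1+1)*((k:ℂ)+1) * (x:ℂ)^k) * Complex.exp (lam*(x:ℂ)))
            = (((k:ℂ)+2) * ((k:ℂ)+1) * kv a lam (k+1))
              * ((x:ℂ)^k * Complex.exp (lam*(x:ℂ))) := by ring
          _ = _ := by rw [hs]
      rw [hBk1]
      simp only [kg, kg2, hB, ha]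
      field_simp
      ring
    have hS : Summable (fun k => -(kg2 a lam k x) +
        ((2*lam*(α:ℂ)/(x:ℂ)) * kg a lam k x + lam^2 * kg a lam k x)) :=
      Sg2.neg.add ((Sg.mul_left _).add (Sg.mul_left _))
    have hsum0 : (∑' k, (-(kg2 a lam k x) +
        ((2*lam*(α:ℂ)/(x:ℂ)) * kg a lam k x + lam^2 * kg a lam k x))) = 0 := by
      have h1 := hS.hasSum.tendsto_sum_nat
      have h2 : ∀ n, (∑ k ∈ Finset.range n, (-(kg2 a lam k x) +
          ((2*lam*(α:ℂ)/(x:ℂ)) * kg a lam k x + lam^2 * kg a lam k x))) = B n := by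
        intro n
        rw [Finset.sum_congr rfl (fun k _ => hterm k), Finset.sum_range_sub]
        simp [hB]
      have h1' := h1.congr h2
      have h3 : Filter.Tendsto B Filter.atTop (nhds 0) := by
        apply squeeze_zero_norm (fun n => ?_) ((kU_summable a lam).tendsto_atTop_zero)
        apply norm_le_kU a lam n x hxa
        have hk : (0:ℝ) ≤ n := Nat.cast_nonneg n
        calc ‖((n:ℂ)+1)*(n:ℂ) * (x:ℂ)^(n-1)‖
            = ((n:ℝ)+1)*(n:ℝ) * ‖(x:ℂ)^(n-1)‖ := by
              rw [norm_mul, norm_mul, norm_natCast_add_one, Complex.norm_natCast]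
          _ ≤ ((n:ℝ)+1)*(n:ℝ) * 2^(n+1) := by
              apply mul_le_mul_of_nonneg_left (hpow_le (n-1) n x (by omega) hxa) (by positivity)
          _ ≤ ((1+2*‖lam‖+‖lam‖^2) * ((n:ℝ)+2)^2) * 2^(n+1) := by
              apply mul_le_mul_of_nonneg_right _ (by positivity)
              nlinarith [sq_nonneg ‖lam‖, mul_nonneg hL hk, sq_nonneg ((n:ℝ)+1),
                mul_nonneg (mul_nonneg hL hk) hk, mul_nonneg (mul_nonneg hL hL) hk]
          _ = (1+2*‖lam‖+‖lam‖^2) * (((n:ℝ)+2)^2 * 2^(n+1)) := by ring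
      exact tendsto_nhds_unique h1' h3
    rw [hdd, hfx]
    have hlin : -(∑' k, kg2 a lam k x) + 2*lam*(α:ℂ)/(x:ℂ) * (∑' k, kg a lam k x)
        + lam^2 * (∑' k, kg a lam k x) = ∑' k, (-(kg2 a lam k x) +
        ((2*lam*(α:ℂ)/(x:ℂ)) * kg a lam k x + lam^2 * kg a lam k x)) := by
      rw [Summable.tsum_add Sg2.neg ((Sg.mul_left _).add (Sg.mul_left _)),
        Summable.tsum_add (Sg.mul_left _) (Sg.mul_left _), tsum_neg, tsum_mul_left, tsum_mul_left]
      ring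
    rw [hlin]
    exact hsum0
  · rw [hf]
    simp only [Complex.ofReal_one, mul_one, one_mul]
    rw [mul_eq_zero]
    simp [Complex.exp_ne_zero]
end
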